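/- Every tuple (q_1,…,q_n) ∈ S²(ℝ^n)ⁿ of symmetric bilinear maps can be written as the sum of an element of W and an element of the image of L^Φ_I; that is, S²(ℝ^n)ⁿ = W + Img L^Φ_I, where I ∈ GL_n(ℝ) is the identity matrix. -/

import Mathlib

open scoped RealInnerProductSpace

noncomputable section

/-- `ℝ^n` with the Euclidean inner product and norm. -/
abbrev E (n : ℕ) : Type := EuclideanSpace ℝ (Fin n)

/-- The symmetric bilinear map `Q_v(ξ,η) = ⟨ξ,η⟩·v − ⟨ξ,v⟩·η − ⟨η,v⟩·ξ`. -/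
def Qv {n : ℕ} (v ξ η : E n) : E n := ⟪ξ, η⟫ • v - ⟪ξ, v⟫ • η - ⟪η, v⟫ • ξ

/-- The bracket `[Q,Q']` of two (symmetric bilinear) maps. -/
def brk {n : ℕ} (Q Q' : E n → E n → E n) (ξ η θ : E n) : E n :=
  (Q ξ (Q' η θ) + Q η (Q' θ ξ) + Q θ (Q' ξ η))
    - (Q' ξ (Q η θ) + Q' η (Q θ ξ) + Q' θ (Q ξ η))

/-- A map `ℝ^n × ℝ^n → ℝ^n` is a symmetric bilinear map. -/
def IsSymmBilin {n : ℕ} (q : E n → E n → E n) : Prop :=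
  (∀ ξ η, q ξ η = q η ξ) ∧ ∀ ξ, IsLinearMap ℝ (q ξ)

/-- The standard basis vectors `e_1, …, e_n` of `ℝ^n`. -/
def stdE (n : ℕ) (i : Fin n) : E n := EuclideanSpace.single i 1

/-- The `i`-th component of `L^Φ_B (A', B')`, where `v = v_i` is the `i`-th column of `B`
and `ω = ω_i` the `i`-th column of `B'`. -/
def LPhiC {n : ℕ} (A' : E n →ₗ[ℝ] E n) (v ω : E n) (ξ η : E n) : E n :=
  A' (Qv v ξ η) - Qv v (A' ξ) η - Qv v ξ (A' η) + Qv ω ξ η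

/-- `(q_1,…,q_n)` lies in the kernel of `L^Ψ_B`, where `v i` are the columns of `B`. -/
def KerPsi {n : ℕ} (v : Fin n → E n) (q : Fin n → E n → E n → E n) : Prop :=
  ∀ i j : Fin n, i < j → ∀ ξ η θ : E n,
    brk (q i) (Qv (v j)) ξ η θ = brk (q j) (Qv (v i)) ξ η θ

/-- `(q_1,…,q_n)` lies in the subspace `W`; `i0` is the index of the first coordinate. -/
def memW {n : ℕ} (i0 : Fin n) (q : Fin n → E n → E n → E n) : Prop :=
  (∀ j, q j (stdE n j) (stdE n j) = 0) ∧
  (∀ i j, ⟪stdE n i, q j (stdE n i) (stdE n i)⟫ + ⟪stdE n j, q i (stdE n j) (stdE n j)⟫ = 0) ∧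
  (∀ j, ⟪stdE n i0, q i0 (stdE n j) (stdE n j)⟫ = 0)


namespace Aux
variable {n : ℕ}

def mkLin (M : Fin n → Fin n → ℝ) : E n →ₗ[ℝ] E n where
  toFun x := WithLp.toLp 2 (fun j => ∑ k, M j k * x k)
  map_add' x y := by
    ext j
    simp [Finset.sum_add_distrib, mul_add]
  map_smul' c x := by
    ext j
    simp [Finset.mul_sum, mul_left_comm, mul_comm]

lemma mkLin_apply (M : Fin n → Fin n → ℝ) (x : E n) (l : Fin n) :
    mkLin M x l = ∑ k, M l k * x k := rfl

lemma std_apply (i j : Fin n) : stdE n i j = if j = i then 1 else 0 := by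
  simp [stdE, EuclideanSpace.single_apply]

lemma inner_std_left (i : Fin n) (x : E n) : ⟪stdE n i, x⟫ = x i := by
  simp [stdE, EuclideanSpace.inner_single_left]

lemma inner_std_right (x : E n) (i : Fin n) : ⟪x, stdE n i⟫ = x i := by
  simp [stdE, EuclideanSpace.inner_single_right]

lemma norm_std (i : Fin n) : ‖stdE n i‖ = 1 := by
  simp [stdE]

lemma Qv_apply (v ξ η : E n) (l : Fin n) :
    Qv v ξ η l = ⟪ξ, η⟫ * v l - ⟪ξ, v⟫ * η l - ⟪η, v⟫ * ξ l := by
  simp [Qv]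

lemma mkLin_std (M : Fin n → Fin n → ℝ) (k l : Fin n) :
    mkLin M (stdE n k) l = M l k := by
  simp [mkLin_apply, std_apply, mul_ite]

lemma Qv_std (i j : Fin n) :
    Qv (stdE n i) (stdE n j) (stdE n j)
      = stdE n i - ((2:ℝ) * (if j = i then 1 else 0)) • stdE n j := by
  by_cases hji : j = i
  · subst hji
    ext l
    simp [Qv_apply, std_apply, inner_std_left, inner_std_right, PiLp.smul_apply, norm_std,
      smul_eq_mul]
    split_ifs <;> ring
  · ext l
    simp only [Qv_apply, std_apply, inner_std_left, inner_std_right, if_neg hji,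
      PiLp.sub_apply, PiLp.smul_apply, smul_eq_mul]
    split_ifs <;> simp_all <;> ring

/-- the matrix of `A'` -/
def Mq (q : Fin n → E n → E n → E n) (i0 : Fin n) (i j : Fin n) : ℝ :=
  if i = j then
    (if i = i0 then 0 else
      -((q i0 (stdE n i) (stdE n i)) i0 + (q i0 (stdE n i0) (stdE n i0)) i0) / 2)
  else
    ((q j (stdE n i) (stdE n i)) i + (q i (stdE n j) (stdE n j)) j
      + (q j (stdE n j) (stdE n j)) i + (q i (stdE n i) (stdE n i)) j) / 8

def sq (q : Fin n → E n → E n → E n) (i0 : Fin n) (i : Fin n) : E n :=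
  q i (stdE n i) (stdE n i) - mkLin (Mq q i0) (stdE n i)

def ωq (q : Fin n → E n → E n → E n) (i0 : Fin n) (i : Fin n) : E n :=
  sq q i0 i - ((2:ℝ) * (sq q i0 i i)) • stdE n i

lemma part1 (q : Fin n → E n → E n → E n) (i0 : Fin n) (j : Fin n) :
    q j (stdE n j) (stdE n j)
      - LPhiC (mkLin (Mq q i0)) (stdE n j) (ωq q i0 j) (stdE n j) (stdE n j) = 0 := by
  ext l
  simp [LPhiC, Qv_std, map_sub, map_smul, Qv_apply, inner_std_left, inner_std_right,
    std_apply, mkLin_std, ωq, sq, smul_eq_mul, norm_std]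
  split_ifs <;> ring


lemma part2 (q : Fin n → E n → E n → E n) (i0 : Fin n) (i j : Fin n) (hij : i ≠ j) :
    ⟪stdE n i, q j (stdE n i) (stdE n i)
        - LPhiC (mkLin (Mq q i0)) (stdE n j) (ωq q i0 j) (stdE n i) (stdE n i)⟫
    + ⟪stdE n j, q i (stdE n j) (stdE n j)
        - LPhiC (mkLin (Mq q i0)) (stdE n i) (ωq q i0 i) (stdE n j) (stdE n j)⟫ = 0 := by
  have hji : j ≠ i := hij.symm
  simp only [LPhiC, Qv_std, map_sub, map_smul, inner_std_left, PiLp.sub_apply,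
    PiLp.add_apply, PiLp.smul_apply, smul_eq_mul, Qv_apply, std_apply,
    inner_std_left, inner_std_right, mkLin_std, ωq, sq, if_neg hij, if_neg hji]
  simp only [Mq, if_neg hij, if_neg hji, if_pos rfl]
  split_ifs <;> ring

lemma part3 (q : Fin n → E n → E n → E n) (i0 : Fin n) (j : Fin n) (hj : j ≠ i0) :
    ⟪stdE n i0, q i0 (stdE n j) (stdE n j)
        - LPhiC (mkLin (Mq q i0)) (stdE n i0) (ωq q i0 i0) (stdE n j) (stdE n j)⟫ = 0 := by
  have hj' : i0 ≠ j := hj.symm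
  simp only [LPhiC, Qv_std, map_sub, map_smul, inner_std_left, PiLp.sub_apply,
    PiLp.add_apply, PiLp.smul_apply, smul_eq_mul, Qv_apply, std_apply,
    inner_std_left, inner_std_right, mkLin_std, ωq, sq, if_neg hj, if_neg hj']
  simp only [Mq, if_neg hj, if_neg hj', if_pos rfl]
  split_ifs <;> ring

end Aux

/-- substance of the proof of Lemma `lemma:H`:
`S²(ℝ^n)ⁿ = W + Img L^Φ_I`: every tuple of symmetric bilinear maps is the sum of an
element of `W` and an element of the image of `L^Φ_I`. -/


theorem stmt5 {n : ℕ} (hn : 1 ≤ n)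
    (q : Fin n → E n → E n → E n) (hq : ∀ i, IsSymmBilin (q i)) :
    ∃ (A' : E n →ₗ[ℝ] E n) (ω : Fin n → E n),
      memW ⟨0, by omega⟩ (fun i ξ η => q i ξ η - LPhiC A' (stdE n i) (ω i) ξ η) := by
  classical
  set i0 : Fin n := ⟨0, by omega⟩
  refine ⟨Aux.mkLin (Aux.Mq q i0), Aux.ωq q i0, ?_, ?_, ?_⟩
  · intro j
    exact Aux.part1 q i0 j
  · intro i j
    by_cases hij : i = j
    · subst hij
      have h := Aux.part1 q i0 i
      simp only [h, inner_zero_right, add_zero]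
    · exact Aux.part2 q i0 i j hij
  · intro j
    by_cases hj : j = i0
    · subst hj
      have h := Aux.part1 q i0 i0
      simp only [h, inner_zero_right]
    · exact Aux.part3 q i0 j hj

end
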